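/- arXiv:1301.6232 — 3 statements merged into one kernel-verified Lean document; each statement's English description precedes it below -/
import Mathlib

section
/- Let L ≥ 1 and a > 0. Define A_a = {α ∈ ℝ₊^L : ∑_{i=1}^L α_i = a} and B_a = {α ∈ ∂ℝ₊^L : ∑_{i=1}^L α_i ≤ a}, where ∂ℝ₊^L is the set of points of ℝ₊^L with at least one vanishing coordinate. Then the map φ(α) = α + (1/L)(a − ∑_{i=1}^L α_i)·(1,…,1) maps B_a into A_a, is continuous, and is a bijection from B_a onto A_a whose inverse is the continuous map φ⁻¹(α) = α − (min_{1≤i≤L} α_i)·(1,…,1); in particular φ is a homeomorphism from B_a onto A_a. -/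
open Set Metric Filter Topology

noncomputable section

theorem phi_homeomorphism_Ba_Aa (L : ℕ) (hL : 1 ≤ L) (a : ℝ) (ha : 0 < a)
    (A B : Set (Fin L → ℝ))
    (hA : A = {α : Fin L → ℝ | (∀ i, 0 ≤ α i) ∧ ∑ i, α i = a})
    (hB : B = {α : Fin L → ℝ | (∀ i, 0 ≤ α i) ∧ (∃ i, α i = 0) ∧ ∑ i, α i ≤ a})
    (φ ψ : (Fin L → ℝ) → Fin L → ℝ)
    (hφ : ∀ α i, φ α i = α i + (a - ∑ j, α j) / L)
    (hψ : ∀ α i, ψ α i = α i - ⨅ j, α j) :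
    MapsTo φ B A ∧ ContinuousOn φ B ∧ BijOn φ B A ∧
    MapsTo ψ A B ∧ ContinuousOn ψ A ∧
    (∀ α ∈ B, ψ (φ α) = α) ∧ (∀ β ∈ A, φ (ψ β) = β) := by
  haveI : NeZero L := ⟨by omega⟩
  haveI : Nonempty (Fin L) := Fin.pos_iff_nonempty.mp (by omega)
  have hLpos : (0:ℝ) < L := by exact_mod_cast hL
  -- inf facts
  have hinf_le : ∀ (α : Fin L → ℝ) (i : Fin L), (⨅ j, α j) ≤ α i := fun α i =>
    ciInf_le (Set.Finite.bddBelow (Set.finite_range α)) i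
  have hinf_attained : ∀ (α : Fin L → ℝ), ∃ i, α i = ⨅ j, α j := by
    intro α
    obtain ⟨i0, hi0⟩ := Finite.exists_min α
    exact ⟨i0, le_antisymm (le_ciInf hi0) (hinf_le α i0)⟩
  have hinf_const_add : ∀ (α : Fin L → ℝ) (c : ℝ), (⨅ j, α j + c) = (⨅ j, α j) + c := by
    intro α c
    apply le_antisymm
    · obtain ⟨i0, hi0⟩ := hinf_attained α
      calc (⨅ j, α j + c) ≤ α i0 + c :=
            ciInf_le (Set.Finite.bddBelow (Set.finite_range _)) i0
        _ = (⨅ j, α j) + c := by rw [hi0]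
    · exact le_ciInf fun j => by linarith [hinf_le α j]
  -- maps to
  have hMφ : MapsTo φ B A := by
    intro α hα
    rw [hB] at hα
    obtain ⟨hpos, _, hsum⟩ := hα
    have hc : 0 ≤ (a - ∑ j, α j) / L := div_nonneg (by linarith) hLpos.le
    rw [hA]
    constructor
    · intro i; rw [hφ]; have := hpos i; linarith
    · simp only [hφ, Finset.sum_add_distrib, Finset.sum_const, Finset.card_univ,
        Fintype.card_fin, nsmul_eq_mul]
      field_simp
      ring
  have hMψ : MapsTo ψ A B := by
    intro β hβ
    rw [hA] at hβ
    obtain ⟨hpos, hsum⟩ := hβ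
    have hm : 0 ≤ ⨅ j, β j := le_ciInf hpos
    rw [hB]
    refine ⟨fun i => by rw [hψ]; have := hinf_le β i; linarith, ?_, ?_⟩
    · obtain ⟨i0, hi0⟩ := hinf_attained β
      exact ⟨i0, by rw [hψ, hi0, sub_self]⟩
    · simp only [hψ, Finset.sum_sub_distrib, Finset.sum_const, Finset.card_univ,
        Fintype.card_fin, nsmul_eq_mul, hsum]
      nlinarith
  -- left inverse ψ ∘ φ = id on B
  have hleft : ∀ α ∈ B, ψ (φ α) = α := by
    intro α hα
    rw [hB] at hα
    obtain ⟨hpos, ⟨i0, hi0⟩, _⟩ := hα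
    have hinf0 : (⨅ j, α j) = 0 :=
      le_antisymm (hi0 ▸ hinf_le α i0) (le_ciInf hpos)
    funext i
    rw [hψ]
    have : (⨅ j, φ α j) = (a - ∑ j, α j) / L := by
      have : (⨅ j, φ α j) = ⨅ j, α j + (a - ∑ j, α j) / L := by
        congr 1; funext j; rw [hφ]
      rw [this, hinf_const_add, hinf0, zero_add]
    rw [this, hφ]; ring
  -- right inverse φ ∘ ψ = id on A
  have hright : ∀ β ∈ A, φ (ψ β) = β := by
    intro β hβ
    rw [hA] at hβ
    obtain ⟨hpos, hsum⟩ := hβ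
    funext i
    rw [hφ, hψ]
    have hsumψ : ∑ j, ψ β j = a - L * ⨅ j, β j := by
      simp only [hψ, Finset.sum_sub_distrib, Finset.sum_const, Finset.card_univ,
        Fintype.card_fin, nsmul_eq_mul, hsum]
    have : ∑ j, ψ β j = a - L * ⨅ j, β j := hsumψ
    rw [this]
    field_simp
    ring
  -- continuity
  have hcφ : Continuous φ := by
    apply continuous_pi
    intro i
    simp only [hφ]
    exact ((continuous_apply i).add (((continuous_const.sub
      (continuous_finset_sum _ fun j _ => continuous_apply j))).div_const _))
  have hcinf : Continuous fun α : Fin L → ℝ => ⨅ j, α j := by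
    have : (fun α : Fin L → ℝ => ⨅ j, α j) =
        fun α => Finset.univ.inf' Finset.univ_nonempty α := by
      funext α; rw [Finset.inf'_univ_eq_ciInf]
    rw [this]
    exact Continuous.finset_inf'_apply _ fun i _ => continuous_apply i
  have hcψ : Continuous ψ := by
    apply continuous_pi
    intro i
    simp only [hψ]
    exact (continuous_apply i).sub hcinf
  refine ⟨hMφ, hcφ.continuousOn, ?_, hMψ, hcψ.continuousOn, hleft, hright⟩
  exact InvOn.bijOn ⟨hleft, fun β hβ => hright β hβ⟩ hMφ hMψ
end
end

section
/- Let n ≥ 2, L ≥ 1, and let F = (f_1,…,f_L) : ℝ₊^L → ℝ₊^L be continuous with f_i ≥ 0. Let ᾱ ∈ ℝ^L have all components positive, and suppose the solution u(r) of u_i''(r) + ((n−1)/r) u_i'(r) = −f_i(u(r)), u_i(0) = ᾱ_i, u_i'(0) = 0 (i = 1,…,L) has all components positive for all r ∈ [0,∞). Then the limit β = lim_{r→∞} u(r) exists in ℝ₊^L and F(β) = 0. -/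
open Set Metric Filter Topology

noncomputable section

/-- `F = (f_1, …, f_L)` is non-degenerate: whenever `u ∈ ℝ₊^L` has at least one positive
coordinate and at least one vanishing coordinate, the sum of the components of `F u` over the
indices where `u` vanishes is positive.  (This is equivalent to the formulation via
permutations `i_1, …, i_L` and `1 ≤ k < L`.) -/
def NonDeg {L : ℕ} (F : (Fin L → ℝ) → Fin L → ℝ) : Prop :=
  ∀ u : Fin L → ℝ, (∀ i, 0 ≤ u i) → (∃ i, 0 < u i) → (∃ i, u i = 0) →
    0 < ∑ i, if u i = 0 then F u i else 0

/-- `u` (with derivative `u'`) is a `C²` solution on the set `s ⊆ [0, ∞)` of the radial system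
`u_i'' + ((n-1)/r) u_i' = -f_i(u)`, the radial form of `-Δ u_i = f_i(u)` in `ℝⁿ`. -/
def RadialSol (n : ℕ) {L : ℕ} (F : (Fin L → ℝ) → Fin L → ℝ)
    (u u' : ℝ → Fin L → ℝ) (s : Set ℝ) : Prop :=
  (∀ i, ContinuousOn (fun r => u' r i) s) ∧
  (∀ i, ∀ r ∈ s, HasDerivWithinAt (fun t => u t i) (u' r i) s r) ∧
  (∀ i, ∀ r ∈ s, 0 < r →
    HasDerivWithinAt (fun t => u' t i) (- F (u r) i - ((n : ℝ) - 1) / r * u' r i) s r)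


private lemma antitoneOn_Ici_of_deriv {f f' : ℝ → ℝ} {a : ℝ}
    (hc : ContinuousOn f (Ici a))
    (hd : ∀ r ∈ Ioi a, HasDerivAt f (f' r) r)
    (h' : ∀ r ∈ Ioi a, f' r ≤ 0) :
    AntitoneOn f (Ici a) := by
  apply antitoneOn_of_deriv_nonpos (convex_Ici a) hc
  · rw [interior_Ici]
    exact fun r hr => (hd r hr).differentiableAt.differentiableWithinAt
  · rw [interior_Ici]
    intro r hr
    rw [(hd r hr).deriv]
    exact h' r hr

theorem limit_exists_and_F_vanishes (n L : ℕ) (hn : 2 ≤ n) (hL : 1 ≤ L)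
    (F : (Fin L → ℝ) → Fin L → ℝ)
    (hFcont : ContinuousOn F {u : Fin L → ℝ | ∀ i, 0 ≤ u i})
    (hFnonneg : ∀ u : Fin L → ℝ, (∀ i, 0 ≤ u i) → ∀ i, 0 ≤ F u i)
    (α : Fin L → ℝ) (hα : ∀ i, 0 < α i)
    (u u' : ℝ → Fin L → ℝ)
    (hsol : RadialSol n F u u' (Ici 0))
    (h0 : u 0 = α) (h'0 : ∀ i, u' 0 i = 0)
    (hpos : ∀ r ∈ Ici (0 : ℝ), ∀ i, 0 < u r i) :
    ∃ β : Fin L → ℝ, (∀ i, 0 ≤ β i) ∧ Tendsto u atTop (𝓝 β) ∧ F β = 0 := by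
  obtain ⟨m, rfl⟩ : ∃ m, n = m + 2 := ⟨n - 2, by omega⟩
  obtain ⟨hu'c, hud, hu'd⟩ := hsol
  have hu'at : ∀ i, ∀ r : ℝ, 0 < r → HasDerivAt (fun t => u t i) (u' r i) r :=
    fun i r hr => (hud i r hr.le).hasDerivAt (Ici_mem_nhds hr)
  have hu''at : ∀ i, ∀ r : ℝ, 0 < r →
      HasDerivAt (fun t => u' t i)
        (- F (u r) i - (((m + 2 : ℕ) : ℝ) - 1) / r * u' r i) r :=
    fun i r hr => (hu'd i r hr.le hr).hasDerivAt (Ici_mem_nhds hr)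
  set g : Fin L → ℝ → ℝ := fun i r => r ^ (m + 1) * u' r i with hg
  have hgd : ∀ i, ∀ r : ℝ, 0 < r →
      HasDerivAt (g i) (-(r ^ (m + 1) * F (u r) i)) r := by
    intro i r hr
    have h1 := (hasDerivAt_pow (m + 1) r).mul (hu''at i r hr)
    refine h1.congr_deriv ?_
    have hr0 : r ≠ 0 := ne_of_gt hr
    simp only [Nat.add_sub_cancel]
    push_cast
    field_simp
    ring
  have hgc : ∀ i, ContinuousOn (g i) (Ici 0) :=
    fun i => (continuous_pow (m + 1)).continuousOn.mul (hu'c i)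
  have hunn : ∀ r : ℝ, 0 ≤ r → ∀ j, 0 ≤ u r j := fun r hr j => (hpos r hr j).le
  have hganti : ∀ i, AntitoneOn (g i) (Ici 0) := by
    intro i
    refine antitoneOn_Ici_of_deriv (hgc i) (fun r hr => hgd i r hr) ?_
    intro r hr
    have h1 := hFnonneg (u r) (hunn r hr.le) i
    have h2 : (0:ℝ) ≤ r ^ (m + 1) := pow_nonneg hr.le _
    nlinarith
  have hg0 : ∀ i, g i 0 = 0 := by intro i; simp [hg]
  have hgle : ∀ i, ∀ r : ℝ, 0 ≤ r → g i r ≤ 0 := by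
    intro i r hr
    have := hganti i self_mem_Ici hr hr
    rwa [hg0 i] at this
  have hu'le : ∀ i, ∀ r : ℝ, 0 ≤ r → u' r i ≤ 0 := by
    intro i r hr
    rcases eq_or_lt_of_le hr with h | h
    · rw [← h]; exact (h'0 i).le
    · by_contra hcon
      push_neg at hcon
      exact absurd (mul_pos (pow_pos h (m + 1)) hcon) (not_lt.2 (hgle i r hr))
  have huanti : ∀ i, AntitoneOn (fun r => u r i) (Ici 0) := by
    intro i
    refine antitoneOn_Ici_of_deriv (fun r hr => (hud i r hr).continuousWithinAt)
      (fun r hr => hu'at i r hr) (fun r hr => hu'le i r hr.le)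
  set β : Fin L → ℝ := fun i => ⨅ r : ℝ, u (max r 0) i with hβ
  have hβ0 : ∀ i, 0 ≤ β i := fun i => le_ciInf fun r => (hpos _ (mem_Ici.2 (le_max_right _ _)) i).le
  have hvanti : ∀ i, Antitone (fun r : ℝ => u (max r 0) i) :=
    fun i a b hab => huanti i (le_max_right a 0) (le_max_right b 0) (max_le_max hab le_rfl)
  have hvbdd : ∀ i, BddBelow (range fun r : ℝ => u (max r 0) i) := by
    intro i
    exact ⟨0, by rintro x ⟨r, rfl⟩; exact (hpos _ (mem_Ici.2 (le_max_right _ _)) i).le⟩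
  have hut_i : ∀ i, Tendsto (fun r => u r i) atTop (𝓝 (β i)) := by
    intro i
    have h1 : Tendsto (fun r : ℝ => u (max r 0) i) atTop (𝓝 (β i)) :=
      tendsto_atTop_ciInf (hvanti i) (hvbdd i)
    refine h1.congr' ?_
    filter_upwards [eventually_ge_atTop (0:ℝ)] with r hr
    rw [max_eq_left hr]
  have hut : Tendsto u atTop (𝓝 β) := tendsto_pi_nhds.2 hut_i
  refine ⟨β, hβ0, hut, ?_⟩
  funext i
  by_contra hFβ
  have hc : 0 < F β i := lt_of_le_of_ne (hFnonneg β hβ0 i) (Ne.symm hFβ)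
  set c := F β i with hcdef
  have hFtend : Tendsto (fun r => F (u r) i) atTop (𝓝 c) := by
    have h1 : Tendsto u atTop (𝓝[{v : Fin L → ℝ | ∀ j, 0 ≤ v j}] β) := by
      rw [tendsto_nhdsWithin_iff]
      exact ⟨hut, by filter_upwards [eventually_ge_atTop (0:ℝ)] with r hr using hunn r hr⟩
    exact ((continuous_apply i).tendsto _).comp ((hFcont β hβ0).tendsto.comp h1)
  obtain ⟨R₀, hR₀⟩ := eventually_atTop.1 (hFtend.eventually (eventually_gt_nhds (by linarith : c/2 < c)))
  set R : ℝ := max R₀ 1 with hRdef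
  have hR1 : (1:ℝ) ≤ R := le_max_right _ _
  have hRpos : (0:ℝ) < R := lt_of_lt_of_le one_pos hR1
  set N : ℝ := (m : ℝ) + 2 with hNdef
  have hN : (0:ℝ) < N := by positivity
  set h : ℝ → ℝ := fun r => g i r + c / (2 * N) * r ^ (m + 2) with hhdef
  have hhd : ∀ r ∈ Ioi R, HasDerivAt h (r ^ (m + 1) * (c / 2 - F (u r) i)) r := by
    intro r hr
    have hrpos : 0 < r := lt_trans hRpos hr
    have h1 := (hgd i r hrpos).add ((hasDerivAt_pow (m + 2) r).const_mul (c / (2 * N)))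
    refine h1.congr_deriv ?_
    have hred : m + 2 - 1 = m + 1 := rfl
    rw [hred]
    have hN0 : N ≠ 0 := ne_of_gt hN
    push_cast [hNdef]
    field_simp
    ring
  have hh'le : ∀ r ∈ Ioi R, r ^ (m + 1) * (c / 2 - F (u r) i) ≤ 0 := by
    intro r hr
    have hrpos : 0 < r := lt_trans hRpos hr
    have hF : c / 2 < F (u r) i := hR₀ r ((le_max_left _ _).trans hr.le)
    have h2 : (0:ℝ) ≤ r ^ (m + 1) := pow_nonneg hrpos.le _
    nlinarith
  have hhc : ContinuousOn h (Ici R) := by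
    refine ContinuousOn.add ((hgc i).mono (Ici_subset_Ici.2 hRpos.le)) ?_
    exact (continuous_const.mul (continuous_pow (m + 2))).continuousOn
  have hhanti : AntitoneOn h (Ici R) := antitoneOn_Ici_of_deriv hhc hhd hh'le
  have hgbound : ∀ r : ℝ, R ≤ r → g i r ≤ c / (2 * N) * (R ^ (m + 2) - r ^ (m + 2)) := by
    intro r hr
    have h1 : h r ≤ h R := hhanti self_mem_Ici hr hr
    have h2 : g i R ≤ 0 := hgle i R hRpos.le
    simp only [hhdef] at h1
    linarith
  set e : ℝ := c / (2 * N) with hedef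
  have he : (0:ℝ) < e := by positivity
  have key : ∀ r : ℝ, 2 * R ≤ r → u' r i ≤ -(e * R) := by
    intro r hr
    have hrpos : 0 < r := lt_of_lt_of_le (by linarith) hr
    have hRr : R ^ (m + 2) ≤ r ^ (m + 2) / 2 := by
      have h1 : R ^ (m + 2) ≤ (r / 2) ^ (m + 2) :=
        pow_le_pow_left₀ hRpos.le (by linarith) _
      have h2 : ((2:ℝ)) ≤ 2 ^ (m + 2) := by
        calc (2:ℝ) = 2 ^ 1 := (pow_one 2).symm
        _ ≤ 2 ^ (m + 2) := pow_le_pow_right₀ one_le_two (by omega)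
      have h3 : (r / 2) ^ (m + 2) = r ^ (m + 2) / 2 ^ (m + 2) := div_pow r 2 (m + 2)
      have h4 : r ^ (m + 2) / 2 ^ (m + 2) ≤ r ^ (m + 2) / 2 := by
        gcongr
      linarith
    have hg2 : g i r ≤ -(e / 2) * r * r ^ (m + 1) := by
      have h1 := hgbound r (by linarith)
      have h5 : e * (R ^ (m + 2) - r ^ (m + 2)) ≤ -(e / 2) * r ^ (m + 2) := by
        have h6 : R ^ (m + 2) - r ^ (m + 2) ≤ -(r ^ (m + 2) / 2) := by linarith
        calc e * (R ^ (m + 2) - r ^ (m + 2))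
            ≤ e * (-(r ^ (m + 2) / 2)) := mul_le_mul_of_nonneg_left h6 he.le
        _ = -(e / 2) * r ^ (m + 2) := by ring
      have h7 : -(e / 2) * r ^ (m + 2) = -(e / 2) * r * r ^ (m + 1) := by ring
      linarith
    have h7 : u' r i ≤ -(e / 2) * r := by
      have hp : (0:ℝ) < r ^ (m + 1) := pow_pos hrpos _
      rw [hg] at hg2
      nlinarith
    have h8 : -(e / 2) * r ≤ -(e * R) := by nlinarith
    linarith
  set d : ℝ := e * R with hddef
  have hd0 : 0 < d := by positivity
  have hd0' : d ≠ 0 := ne_of_gt hd0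
  set k : ℝ → ℝ := fun r => u r i + d * r with hkdef
  have hkanti : AntitoneOn k (Ici (2 * R)) := by
    refine antitoneOn_Ici_of_deriv (f' := fun r => u' r i + d) ?_ (fun r hr => ?_) (fun r hr => ?_)
    · refine ContinuousOn.add ?_ (continuous_const.mul continuous_id).continuousOn
      exact fun r hr => ((hud i r (by simp at hr ⊢; linarith)).continuousWithinAt).mono
        (Ici_subset_Ici.2 (by linarith))
    · have hrpos : 0 < r := lt_of_le_of_lt (by linarith) hr
      exact (hu'at i r hrpos).add (by simpa using (hasDerivAt_id r).const_mul d)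
    · have := key r hr.le
      simp only [hddef]
      linarith
  set r₁ : ℝ := 2 * R + (u (2 * R) i + 1) / d with hr₁def
  have hu2R : 0 < u (2 * R) i := hpos _ (mem_Ici.2 (by linarith)) i
  have hr₁ : 2 * R ≤ r₁ := by
    have hq : 0 ≤ (u (2 * R) i + 1) / d := div_nonneg (by linarith) hd0.le
    rw [hr₁def]
    linarith
  have hk1 : k r₁ ≤ k (2 * R) := hkanti self_mem_Ici hr₁ hr₁
  have hcalc : d * r₁ = d * (2 * R) + (u (2 * R) i + 1) := by
    rw [hr₁def]
    field_simp
  have hfinal : u r₁ i ≤ -1 := by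
    simp only [hkdef] at hk1
    linarith [hcalc ▸ hk1]
  have hlast : 0 < u r₁ i := hpos r₁ (mem_Ici.2 (by linarith)) i
  linarith
end
end

section
/- Let n ≥ 2, L ≥ 2, and let F = (f_1,…,f_L) : ℝ₊^L → ℝ₊^L be continuous, Lipschitz on the interior of ℝ₊^L, non-degenerate, with f_i ≥ 0. Let ᾱ ∈ ∂ℝ₊^L with ᾱ ≠ 0 (so ᾱ has at least one zero coordinate and at least one positive coordinate). Then for every ε > 0 there exists δ > 0 such that for every initial value α with all components positive and |α − ᾱ| < δ, the solution u(r,α) of u_i'' + ((n−1)/r) u_i' = −f_i(u), u(0) = α, u'(0) = 0 reaches ∂ℝ₊^L at some first time r_α < ε (some component of u(r_α,α) vanishes), and |u(r_α,α) − ᾱ| < ε. -/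
open Set Metric Filter Topology

set_option maxHeartbeats 1000000

noncomputable section

lemma myMonoOn {f f' : ℝ → ℝ} {a b : ℝ}
    (hc : ContinuousOn f (Icc a b))
    (hd : ∀ x ∈ Ioo a b, HasDerivAt f (f' x) x)
    (h0 : ∀ x ∈ Ioo a b, 0 ≤ f' x) :
    MonotoneOn f (Icc a b) := by
  apply monotoneOn_of_deriv_nonneg (convex_Icc a b) hc
  · rw [interior_Icc]
    exact fun x hx => (hd x hx).differentiableAt.differentiableWithinAt
  · rw [interior_Icc]
    intro x hx
    rw [(hd x hx).deriv]
    exact h0 x hx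

lemma myAntiOn {f f' : ℝ → ℝ} {a b : ℝ}
    (hc : ContinuousOn f (Icc a b))
    (hd : ∀ x ∈ Ioo a b, HasDerivAt f (f' x) x)
    (h0 : ∀ x ∈ Ioo a b, f' x ≤ 0) :
    AntitoneOn f (Icc a b) := by
  apply antitoneOn_of_deriv_nonpos (convex_Icc a b) hc
  · rw [interior_Icc]
    exact fun x hx => (hd x hx).differentiableAt.differentiableWithinAt
  · rw [interior_Icc]
    intro x hx
    rw [(hd x hx).deriv]
    exact h0 x hx

theorem target_map_continuous_at_boundary (n L : ℕ) (hn : 2 ≤ n) (hL : 2 ≤ L)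
    (F : (Fin L → ℝ) → Fin L → ℝ)
    (hFcont : ContinuousOn F {u : Fin L → ℝ | ∀ i, 0 ≤ u i})
    (hFnonneg : ∀ u : Fin L → ℝ, (∀ i, 0 ≤ u i) → ∀ i, 0 ≤ F u i)
    (hFlip : LocallyLipschitzOn {u : Fin L → ℝ | ∀ i, 0 < u i} F)
    (hFnd : NonDeg F)
    (ᾱ : Fin L → ℝ) (hᾱnonneg : ∀ i, 0 ≤ ᾱ i) (hᾱbdry : ∃ i, ᾱ i = 0) (hᾱne : ᾱ ≠ 0) :
    ∀ ε : ℝ, 0 < ε → ∃ δ : ℝ, 0 < δ ∧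
      ∀ α : Fin L → ℝ, (∀ i, 0 < α i) → ‖α - ᾱ‖ < δ →
        ∀ u u' : ℝ → Fin L → ℝ,
          RadialSol n F u u' (Icc 0 ε) → u 0 = α → (∀ i, u' 0 i = 0) →
          ∃ rα : ℝ, 0 ≤ rα ∧ rα < ε ∧
            (∀ r ∈ Ico (0 : ℝ) rα, ∀ i, 0 < u r i) ∧
            (∃ i, u rα i = 0) ∧ ‖u rα - ᾱ‖ < ε := by
  intro ε hε
  classical
  set Z : Finset (Fin L) := Finset.univ.filter (fun i => ᾱ i = 0) with hZdef
  have hZne : Z.Nonempty := by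
    obtain ⟨i, hi⟩ := hᾱbdry
    exact ⟨i, by simp [hZdef, hi]⟩
  have hZmem : ∀ i ∈ Z, ᾱ i = 0 := by
    intro i hi
    simpa [hZdef] using hi
  have hpos : ∃ i, 0 < ᾱ i := by
    by_contra h
    push_neg at h
    exact hᾱne (funext fun i => le_antisymm (h i) (hᾱnonneg i))
  set c := ∑ i ∈ Z, F ᾱ i with hcdef
  have hc : 0 < c := by
    have h := hFnd ᾱ hᾱnonneg hpos hᾱbdry
    rw [hcdef, hZdef, Finset.sum_filter]
    exact h
  have hL0 : (0:ℝ) < L := by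
    have : (0:ℕ) < L := by omega
    exact_mod_cast this
  have hn0 : (0:ℝ) < n := by
    have : (0:ℕ) < n := by omega
    exact_mod_cast this
  have hn1 : (1:ℝ) ≤ n := by
    have : (1:ℕ) ≤ n := by omega
    exact_mod_cast this
  have hcL : 0 < c/(2*L) := by positivity
  -- continuity of F at ᾱ within the cone
  have hcw := hFcont ᾱ hᾱnonneg
  rw [Metric.continuousWithinAt_iff] at hcw
  obtain ⟨ρ₀, hρ₀, hρ₀p⟩ := hcw (c/(2*L)) hcL
  set ρ := min (ρ₀/2) (ε/2) with hρdef
  have hρpos : 0 < ρ := by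
    apply lt_min <;> positivity
  have hρε : ρ ≤ ε/2 := min_le_right _ _
  have hρρ₀ : ρ < ρ₀ := lt_of_le_of_lt (min_le_left _ _) (by linarith)
  set M := ‖F ᾱ‖ + c/(2*L) with hMdef
  have hM : 0 < M := by
    have := norm_nonneg (F ᾱ)
    rw [hMdef]; linarith
  -- bounds on F on the region (cone ∩ ball)
  have region : ∀ v : Fin L → ℝ, (∀ i, 0 ≤ v i) → ‖v - ᾱ‖ ≤ ρ →
      (∀ i, F v i ≤ M) ∧ c/2 ≤ ∑ i ∈ Z, F v i := by
    intro v hv hvρ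
    have hd : dist (F v) (F ᾱ) < c/(2*L) := by
      apply hρ₀p hv
      rw [dist_eq_norm]
      exact lt_of_le_of_lt hvρ hρρ₀
    rw [dist_eq_norm] at hd
    have hcomp : ∀ i, |F v i - F ᾱ i| ≤ ‖F v - F ᾱ‖ := by
      intro i
      have := norm_le_pi_norm (F v - F ᾱ) i
      simpa using this
    constructor
    · intro i
      have h1 := abs_le.1 (hcomp i)
      have h2 := abs_le.1 (by simpa using norm_le_pi_norm (F ᾱ) i : |F ᾱ i| ≤ ‖F ᾱ‖)
      rw [hMdef]
      linarith [h1.2, h2.2]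
    · have hsum : |∑ i ∈ Z, F v i - ∑ i ∈ Z, F ᾱ i| ≤ ∑ i ∈ Z, |F v i - F ᾱ i| := by
        rw [← Finset.sum_sub_distrib]
        exact Finset.abs_sum_le_sum_abs _ _
      have hb : ∑ i ∈ Z, |F v i - F ᾱ i| ≤ (Z.card : ℝ) * (c/(2*L)) := by
        calc ∑ i ∈ Z, |F v i - F ᾱ i| ≤ ∑ _i ∈ Z, c/(2*L) :=
              Finset.sum_le_sum (fun i _ => le_of_lt (lt_of_le_of_lt (hcomp i) hd))
          _ = (Z.card : ℝ) * (c/(2*L)) := by rw [Finset.sum_const, nsmul_eq_mul]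
      have hcard : (Z.card : ℝ) ≤ (L:ℝ) := by
        have h1 : Z.card ≤ L := by
          have := Finset.card_le_univ Z
          simpa using this
        exact_mod_cast h1
      have hbb : (Z.card : ℝ) * (c/(2*L)) ≤ (L:ℝ) * (c/(2*L)) :=
        mul_le_mul_of_nonneg_right hcard (le_of_lt hcL)
      have heq : (L:ℝ) * (c/(2*L)) = c/2 := by
        field_simp
      have habs := abs_le.1 hsum
      rw [← hcdef] at *
      nlinarith [habs.1, hb, hbb, heq]
  set r₀ := min (ε/2) (Real.sqrt (ρ/(2*M))) with hr₀def
  have hr₀pos : 0 < r₀ := by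
    apply lt_min (by positivity)
    apply Real.sqrt_pos.2
    positivity
  have hr₀ε : r₀ < ε := lt_of_le_of_lt (min_le_left _ _) (by linarith)
  have hr₀M : M * r₀^2 / 2 ≤ ρ/4 := by
    have h1 : r₀ ≤ Real.sqrt (ρ/(2*M)) := min_le_right _ _
    have h2 : r₀^2 ≤ ρ/(2*M) := by
      have := pow_le_pow_left₀ (le_of_lt hr₀pos) h1 2
      rwa [Real.sq_sqrt (by positivity : (0:ℝ) ≤ ρ/(2*M))] at this
    have h3 : M * r₀^2 ≤ M * (ρ/(2*M)) := mul_le_mul_of_nonneg_left h2 (le_of_lt hM)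
    have h4 : M * (ρ/(2*M)) = ρ/2 := by
      field_simp
    linarith
  set δ := min (ρ/4) (c*r₀^2/(8*n*L)) with hδdef
  have hδpos : 0 < δ := by
    apply lt_min <;> positivity
  have hδρ : δ ≤ ρ/4 := min_le_left _ _
  have hδr : δ ≤ c*r₀^2/(8*n*L) := min_le_right _ _
  clear_value Z c ρ M r₀ δ
  refine ⟨δ, hδpos, ?_⟩
  intro α hα hαδ u u' hsol hu0 hu'0
  obtain ⟨hu'c, hud, hu'd⟩ := hsol
  have hucont : ∀ i, ContinuousOn (fun r => u r i) (Icc 0 ε) :=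
    fun i r hr => (hud i r hr).continuousWithinAt
  have hatU : ∀ i, ∀ r, 0 < r → r < ε → HasDerivAt (fun t => u t i) (u' r i) r := by
    intro i r h1 h2
    exact (hud i r ⟨le_of_lt h1, le_of_lt h2⟩).hasDerivAt (Icc_mem_nhds h1 h2)
  have hatU' : ∀ i, ∀ r, 0 < r → r < ε →
      HasDerivAt (fun t => u' t i) (- F (u r) i - ((n:ℝ)-1)/r * u' r i) r := by
    intro i r h1 h2
    exact (hu'd i r ⟨le_of_lt h1, le_of_lt h2⟩ h1).hasDerivAt (Icc_mem_nhds h1 h2)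
  have hu0i : ∀ i, u 0 i = α i := fun i => by rw [hu0]
  have hnormcont : ContinuousOn (fun r => ‖u r - ᾱ‖) (Icc 0 ε) := by
    have h1 : ContinuousOn u (Icc 0 ε) := by
      apply continuousOn_pi.2
      exact hucont
    exact (h1.sub continuousOn_const).norm
  -- casts used in derivative computations
  have hcast : ((n-1 : ℕ) : ℝ) = (n:ℝ) - 1 := by
    push_cast [Nat.cast_sub (by omega : 1 ≤ n)]
    ring
  -- The key a priori estimates on an interval [0, R] where the solution stays
  -- in the cone and in the ball of radius ρ around ᾱ.
  have keyEst : ∀ R, 0 < R → R ≤ r₀ →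
      (∀ r ∈ Icc (0:ℝ) R, ∀ i, 0 ≤ u r i) →
      (∀ r ∈ Icc (0:ℝ) R, ‖u r - ᾱ‖ ≤ ρ) →
      (∀ r ∈ Icc (0:ℝ) R, ∀ i, u r i ≤ α i ∧ α i - M*r^2/2 ≤ u r i) ∧
      (∑ i ∈ Z, u R i) + c/(4*n)*R^2 ≤ ∑ i ∈ Z, α i := by
    intro R hR hRr₀ hcone hball
    have hRε : R < ε := lt_of_le_of_lt hRr₀ hr₀ε
    have hIccsub : Icc (0:ℝ) R ⊆ Icc 0 ε := Icc_subset_Icc le_rfl (le_of_lt hRε)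
    have hIooIcc : Ioo (0:ℝ) R ⊆ Icc 0 R := Ioo_subset_Icc_self
    have h0mem : (0:ℝ) ∈ Icc (0:ℝ) R := ⟨le_rfl, le_of_lt hR⟩
    have hFb : ∀ r ∈ Icc (0:ℝ) R,
        (∀ i, 0 ≤ F (u r) i) ∧ (∀ i, F (u r) i ≤ M) ∧ c/2 ≤ ∑ i ∈ Z, F (u r) i := by
      intro r hr
      have h := region (u r) (hcone r hr) (hball r hr)
      exact ⟨hFnonneg _ (hcone r hr), h.1, h.2⟩
    -- Step (a): each u' r i ≤ 0
    have hstepa : ∀ i, ∀ r ∈ Icc (0:ℝ) R, u' r i ≤ 0 := by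
      intro i
      have hφanti : AntitoneOn (fun t => t^(n-1) * u' t i) (Icc 0 R) := by
        apply myAntiOn (f' := fun x => -(x^(n-1) * F (u x) i))
        · exact (continuous_pow (n-1)).continuousOn.mul ((hu'c i).mono hIccsub)
        · intro x hx
          have h := (hasDerivAt_pow (n-1) x).mul (hatU' i x hx.1 (lt_trans hx.2 hRε))
          convert h using 1
          case e'_4 => rfl
          case e'_5 => rfl
          case e'_8 => rfl
          have h2 : x^(n-1-1) * x = x^(n-1) := by rw [← pow_succ]; congr 1; omega
          rw [hcast]
          have hx0 : x ≠ 0 := ne_of_gt hx.1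
          field_simp
          linear_combination (-(((n:ℝ)-1) * u' x i)) * h2
        · intro x hx
          have h1 := (hFb x (hIooIcc hx)).1 i
          have h2 : (0:ℝ) ≤ x^(n-1) := pow_nonneg (le_of_lt hx.1) _
          nlinarith
      intro r hr
      rcases eq_or_lt_of_le hr.1 with h0 | h0
      · rw [← h0] at hr ⊢
        exact le_of_eq (hu'0 i)
      · have h : r^(n-1) * u' r i ≤ (0:ℝ)^(n-1) * u' 0 i := hφanti h0mem hr hr.1
        rw [zero_pow (by omega : n - 1 ≠ 0), zero_mul] at h
        have hp : (0:ℝ) < r^(n-1) := pow_pos h0 _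
        nlinarith
    -- Step (b): each component is nonincreasing
    have hstepb : ∀ i, AntitoneOn (fun t => u t i) (Icc 0 R) := by
      intro i
      apply myAntiOn (f' := fun x => u' x i) ((hucont i).mono hIccsub)
      · exact fun x hx => hatU i x hx.1 (lt_trans hx.2 hRε)
      · exact fun x hx => hstepa i x (hIooIcc hx)
    -- Step (c): u' r i ≥ -M r
    have hstepc : ∀ i, ∀ r ∈ Icc (0:ℝ) R, -(M*r) ≤ u' r i := by
      intro i
      have hmono : MonotoneOn (fun t => u' t i + M*t) (Icc 0 R) := by
        apply myMonoOn (f' := fun x => (- F (u x) i - ((n:ℝ)-1)/x * u' x i) + M)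
        · exact ((hu'c i).mono hIccsub).add (continuous_const.mul continuous_id).continuousOn
        · intro x hx
          exact (hatU' i x hx.1 (lt_trans hx.2 hRε)).add
            (by simpa using (hasDerivAt_id x).const_mul M)
        · intro x hx
          have h1 := (hFb x (hIooIcc hx)).2.1 i
          have h2 := hstepa i x (hIooIcc hx)
          have h3 : 0 ≤ ((n:ℝ)-1)/x := div_nonneg (by linarith) (le_of_lt hx.1)
          have h4 : ((n:ℝ)-1)/x * u' x i ≤ 0 := mul_nonpos_of_nonneg_of_nonpos h3 h2
          linarith
      intro r hr
      have h := hmono h0mem hr hr.1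
      simp only [mul_zero, add_zero] at h
      rw [hu'0 i] at h
      linarith
    -- Step (d): lower bound on u
    have hstepd : ∀ i, ∀ r ∈ Icc (0:ℝ) R, α i - M*r^2/2 ≤ u r i := by
      intro i
      have hmono : MonotoneOn (fun t => u t i + M*t^2/2) (Icc 0 R) := by
        apply myMonoOn (f' := fun x => u' x i + M*x)
        · exact ((hucont i).mono hIccsub).add
            ((continuous_const.mul (continuous_pow 2)).div_const 2).continuousOn
        · intro x hx
          have h1 : HasDerivAt (fun t : ℝ => M*t^2/2) (M*x) x := by
            have := ((hasDerivAt_pow 2 x).const_mul M).div_const 2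
            convert this using 1
            case e'_4 => rfl
            case e'_5 => rfl
            push_cast
            ring
          exact (hatU i x hx.1 (lt_trans hx.2 hRε)).add h1
        · intro x hx
          have := hstepc i x (hIooIcc hx)
          linarith
      intro r hr
      have h := hmono h0mem hr hr.1
      simp only [mul_zero, zero_pow, ne_eq, OfNat.ofNat_ne_zero, not_false_eq_true,
        zero_div, add_zero] at h
      rw [hu0i i] at h
      linarith
    -- Step (e): the sum over Z decays quadratically
    have hsumest : (∑ i ∈ Z, u R i) + c/(4*n)*R^2 ≤ ∑ i ∈ Z, α i := by
      have hWd : ∀ x, 0 < x → x < ε →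
          HasDerivAt (fun t => ∑ i ∈ Z, u' t i)
            (∑ i ∈ Z, (- F (u x) i - ((n:ℝ)-1)/x * u' x i)) x :=
        fun x h1 h2 => HasDerivAt.fun_sum (fun i _ => hatU' i x h1 h2)
      have hΦanti : AntitoneOn
          (fun t => t^(n-1) * (∑ i ∈ Z, u' t i) + c/(2*n)*t^n) (Icc 0 R) := by
        apply myAntiOn (f' := fun x => x^(n-1) * (c/2 - ∑ i ∈ Z, F (u x) i))
        · apply ContinuousOn.add
          · exact (continuous_pow (n-1)).continuousOn.mul
              (continuousOn_finset_sum Z (fun i _ => (hu'c i).mono hIccsub))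
          · exact (continuous_const.mul (continuous_pow n)).continuousOn
        · intro x hx
          have hxε : x < ε := lt_trans hx.2 hRε
          have h := ((hasDerivAt_pow (n-1) x).mul (hWd x hx.1 hxε)).add
            ((hasDerivAt_pow n x).const_mul (c/(2*n)))
          convert h using 1
          case e'_4 => rfl
          case e'_5 => rfl
          case e'_8 => rfl
          have hsplit : ∑ i ∈ Z, (- F (u x) i - ((n:ℝ)-1)/x * u' x i)
              = -(∑ i ∈ Z, F (u x) i) - ((n:ℝ)-1)/x * (∑ i ∈ Z, u' x i) := by
            rw [Finset.sum_sub_distrib, Finset.mul_sum, ← Finset.sum_neg_distrib]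
          rw [hsplit, hcast]
          have h2 : x^(n-1-1) * x = x^(n-1) := by rw [← pow_succ]; congr 1; omega
          have hx0 : x ≠ 0 := ne_of_gt hx.1
          have hn0' : (n:ℝ) ≠ 0 := ne_of_gt hn0
          field_simp
          rw [← h2]
          ring
        · intro x hx
          have h1 := (hFb x (hIooIcc hx)).2.2
          have h2 : (0:ℝ) ≤ x^(n-1) := pow_nonneg (le_of_lt hx.1) _
          nlinarith
      -- deduce W' r ≤ -c/(2n) r
      have hW'le : ∀ x ∈ Ioo (0:ℝ) R, (∑ i ∈ Z, u' x i) + c/(2*n)*x ≤ 0 := by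
        intro x hx
        have h : x^(n-1) * (∑ i ∈ Z, u' x i) + c/(2*n)*x^n
            ≤ (0:ℝ)^(n-1) * (∑ i ∈ Z, u' 0 i) + c/(2*n)*(0:ℝ)^n :=
          hΦanti h0mem (hIooIcc hx) (le_of_lt hx.1)
        rw [zero_pow (by omega : n - 1 ≠ 0), zero_pow (by omega : n ≠ 0)] at h
        simp only [zero_mul, mul_zero, add_zero] at h
        have h3 : x^(n-1) * x = x^n := by rw [← pow_succ]; congr 1; omega
        have hp : (0:ℝ) < x^(n-1) := pow_pos hx.1 _
        have h6 : x^(n-1) * ((∑ i ∈ Z, u' x i) + c/(2*n)*x)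
            = x^(n-1) * (∑ i ∈ Z, u' x i) + c/(2*n)*x^n := by
          rw [← h3]; ring
        by_contra hcon
        push_neg at hcon
        nlinarith [mul_pos hp hcon]
      have hηanti : AntitoneOn
          (fun t => (∑ i ∈ Z, u t i) + c/(4*n)*t^2) (Icc 0 R) := by
        apply myAntiOn (f' := fun x => (∑ i ∈ Z, u' x i) + c/(2*n)*x)
        · exact (continuousOn_finset_sum Z (fun i _ => (hucont i).mono hIccsub)).add
            (continuous_const.mul (continuous_pow 2)).continuousOn
        · intro x hx
          have h1 : HasDerivAt (fun t : ℝ => c/(4*n)*t^2) (c/(2*n)*x) x := by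
            have := (hasDerivAt_pow 2 x).const_mul (c/(4*n))
            convert this using 1
            case e'_4 => rfl
            case e'_5 => rfl
            push_cast
            ring
          exact (HasDerivAt.fun_sum (fun i _ => hatU i x hx.1 (lt_trans hx.2 hRε))).add h1
        · exact hW'le
      have h : (∑ i ∈ Z, u R i) + c/(4*n)*R^2
          ≤ (∑ i ∈ Z, u 0 i) + c/(4*n)*(0:ℝ)^2 :=
        hηanti h0mem ⟨le_of_lt hR, le_rfl⟩ (le_of_lt hR)
      have h0 : (∑ i ∈ Z, u 0 i) = ∑ i ∈ Z, α i :=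
        Finset.sum_congr rfl (fun i _ => hu0i i)
      rw [h0] at h
      nlinarith
    refine ⟨?_, hsumest⟩
    intro r hr i
    constructor
    · have h : u r i ≤ u 0 i := hstepb i h0mem hr hr.1
      rw [hu0i i] at h
      exact h
    · exact hstepd i r hr
  -- norm bound from the componentwise estimates
  have normBd : ∀ R, 0 < R → R ≤ r₀ →
      (∀ r ∈ Icc (0:ℝ) R, ∀ i, 0 ≤ u r i) →
      (∀ r ∈ Icc (0:ℝ) R, ‖u r - ᾱ‖ ≤ ρ) →
      ∀ r ∈ Icc (0:ℝ) R, ‖u r - ᾱ‖ ≤ ‖α - ᾱ‖ + M*r^2/2 := by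
    intro R hR hRr₀ hcone hball r hr
    have hcomp := (keyEst R hR hRr₀ hcone hball).1 r hr
    have hb : (0:ℝ) ≤ ‖α - ᾱ‖ + M*r^2/2 := by positivity
    rw [pi_norm_le_iff_of_nonneg hb]
    intro i
    have h1 := (hcomp i).1
    have h2 := (hcomp i).2
    have h3 := abs_le.1 (by simpa using norm_le_pi_norm (α - ᾱ) i : |α i - ᾱ i| ≤ ‖α - ᾱ‖)
    simp only [Pi.sub_apply, Real.norm_eq_abs]
    rw [abs_le]
    constructor <;> linarith [h3.1, h3.2]
  -- bootstrap: the cone condition alone implies the ball condition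
  have ballLemma : ∀ R, 0 < R → R ≤ r₀ →
      (∀ r ∈ Icc (0:ℝ) R, ∀ i, 0 ≤ u r i) →
      ∀ r ∈ Icc (0:ℝ) R, ‖u r - ᾱ‖ ≤ ρ := by
    intro R hR hRr₀ hcone
    by_contra hcon
    push_neg at hcon
    obtain ⟨r₁, hr₁, hr₁ρ⟩ := hcon
    set A := {r ∈ Icc (0:ℝ) R | ρ ≤ ‖u r - ᾱ‖} with hAdef
    have hRε : R < ε := lt_of_le_of_lt hRr₀ hr₀ε
    have hIccsub : Icc (0:ℝ) R ⊆ Icc 0 ε := Icc_subset_Icc le_rfl (le_of_lt hRε)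
    have hAne : A.Nonempty := ⟨r₁, hr₁, le_of_lt hr₁ρ⟩
    have hAbdd : BddBelow A := ⟨0, fun x hx => hx.1.1⟩
    have hAclosed : IsClosed A := by
      have h1 : A = Icc (0:ℝ) R ∩ (fun r => ‖u r - ᾱ‖) ⁻¹' (Ici ρ) := by
        ext x
        simp [hAdef, mem_Ici, and_comm]
      rw [h1]
      exact (hnormcont.mono hIccsub).preimage_isClosed_of_isClosed isClosed_Icc isClosed_Ici
    set T₂ := sInf A with hT₂def
    have hT₂A : T₂ ∈ A := hAclosed.csInf_mem hAne hAbdd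
    clear_value T₂
    have hT₂Icc : T₂ ∈ Icc (0:ℝ) R := hT₂A.1
    have hT₂ρ : ρ ≤ ‖u T₂ - ᾱ‖ := hT₂A.2
    have hT₂pos : 0 < T₂ := by
      rcases eq_or_lt_of_le hT₂Icc.1 with h0 | h0
      · exfalso
        rw [← h0] at hT₂ρ
        rw [hu0] at hT₂ρ
        have : ‖α - ᾱ‖ < δ := hαδ
        linarith [hδρ, hρpos]
      · exact h0
    have hballT₂ : ∀ r ∈ Icc (0:ℝ) T₂, ‖u r - ᾱ‖ ≤ ρ := by
      intro r hr
      rcases lt_or_eq_of_le hr.2 with hlt | heq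
      · by_contra hcon2
        push_neg at hcon2
        have hmem : r ∈ A := ⟨⟨hr.1, le_trans (le_of_lt hlt) hT₂Icc.2⟩, le_of_lt hcon2⟩
        have h := csInf_le hAbdd hmem
        rw [← hT₂def] at h
        exact absurd h (not_le.2 hlt)
      · -- r = T₂ : limit argument
        rw [heq]
        have hclos : T₂ ∈ closure (Ico (0:ℝ) T₂) := by
          rw [closure_Ico (ne_of_lt hT₂pos)]
          exact ⟨le_of_lt hT₂pos, le_rfl⟩
        have hne : (𝓝[Ico (0:ℝ) T₂] T₂).NeBot := mem_closure_iff_nhdsWithin_neBot.1 hclos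
        have htend : Tendsto (fun s => ‖u s - ᾱ‖) (𝓝[Ico (0:ℝ) T₂] T₂) (𝓝 (‖u T₂ - ᾱ‖)) := by
          have hcw : ContinuousWithinAt (fun s => ‖u s - ᾱ‖) (Icc 0 ε) T₂ :=
            hnormcont T₂ (hIccsub hT₂Icc)
          exact (hcw.mono (fun x hx => hIccsub ⟨hx.1, le_trans (le_of_lt hx.2) hT₂Icc.2⟩)).tendsto
        apply le_of_tendsto htend
        apply eventually_nhdsWithin_of_forall
        intro s hs
        by_contra hcon2
        push_neg at hcon2
        have hmem : s ∈ A := ⟨⟨hs.1, le_trans (le_of_lt hs.2) hT₂Icc.2⟩, le_of_lt hcon2⟩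
        have h := csInf_le hAbdd hmem
        rw [← hT₂def] at h
        exact absurd h (not_le.2 hs.2)
    have hconeT₂ : ∀ r ∈ Icc (0:ℝ) T₂, ∀ i, 0 ≤ u r i :=
      fun r hr i => hcone r ⟨hr.1, le_trans hr.2 hT₂Icc.2⟩ i
    have hT₂r₀ : T₂ ≤ r₀ := le_trans hT₂Icc.2 hRr₀
    have hbd := normBd T₂ hT₂pos hT₂r₀ hconeT₂ hballT₂ T₂ ⟨le_of_lt hT₂pos, le_rfl⟩
    have hMT₂ : M*T₂^2/2 ≤ M*r₀^2/2 := by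
      have := pow_le_pow_left₀ (le_of_lt hT₂pos) hT₂r₀ 2
      linarith [mul_le_mul_of_nonneg_left this (le_of_lt hM)]
    have : ‖α - ᾱ‖ < δ := hαδ
    linarith [hρpos]
  -- the set of first zeros
  set Q := {r ∈ Icc (0:ℝ) r₀ | ∃ i, u r i = 0} with hQdef
  have hQclosed : IsClosed Q := by
    have h1 : Q = ⋃ i, (Icc (0:ℝ) r₀ ∩ (fun r => u r i) ⁻¹' {0}) := by
      ext x
      simp only [hQdef, mem_setOf_eq, mem_iUnion, mem_inter_iff, mem_preimage,
        mem_singleton_iff]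
      tauto
    rw [h1]
    apply isClosed_iUnion_of_finite
    intro i
    exact ((hucont i).mono (Icc_subset_Icc le_rfl (le_of_lt hr₀ε))).preimage_isClosed_of_isClosed
      isClosed_Icc isClosed_singleton
  have hQbdd : BddBelow Q := ⟨0, fun x hx => hx.1.1⟩
  -- no zero in [0,r] implies positivity on [0,r]
  have posOfNoZero : ∀ r ∈ Icc (0:ℝ) r₀, (∀ t ∈ Icc (0:ℝ) r, t ∉ Q) →
      ∀ t ∈ Icc (0:ℝ) r, ∀ i, 0 < u t i := by
    intro r hr hno t ht i
    by_contra hle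
    push_neg at hle
    have hsub : Icc (0:ℝ) t ⊆ Icc 0 ε :=
      Icc_subset_Icc le_rfl (le_trans ht.2 (le_trans hr.2 (le_of_lt hr₀ε)))
    have hmem : (0:ℝ) ∈ Icc (u t i) (u 0 i) := by
      rw [hu0i i]
      exact ⟨hle, le_of_lt (hα i)⟩
    obtain ⟨s, hs, hs0⟩ := intermediate_value_Icc' ht.1 ((hucont i).mono hsub) hmem
    have hsIcc : s ∈ Icc (0:ℝ) r := ⟨hs.1, le_trans hs.2 ht.2⟩
    exact hno s hsIcc ⟨⟨hs.1, le_trans hsIcc.2 hr.2⟩, i, hs0⟩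
  -- bound on ∑_Z α i
  have hαsum : ∑ i ∈ Z, α i ≤ (L:ℝ) * δ := by
    have h1 : ∀ i ∈ Z, α i ≤ δ := by
      intro i hi
      have h2 := abs_le.1 (by simpa using norm_le_pi_norm (α - ᾱ) i : |α i - ᾱ i| ≤ ‖α - ᾱ‖)
      have h3 := hZmem i hi
      have : ‖α - ᾱ‖ < δ := hαδ
      rw [h3] at h2
      simp only [sub_zero] at h2
      linarith [h2.2]
    calc ∑ i ∈ Z, α i ≤ ∑ _i ∈ Z, δ := Finset.sum_le_sum h1
      _ = (Z.card : ℝ) * δ := by rw [Finset.sum_const, nsmul_eq_mul]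
      _ ≤ (L:ℝ) * δ := by
          apply mul_le_mul_of_nonneg_right _ (le_of_lt hδpos)
          have h1 : Z.card ≤ L := by simpa using Finset.card_le_univ Z
          exact_mod_cast h1
  have hLδ : (L:ℝ) * δ ≤ c*r₀^2/(8*n) := by
    have h1 : δ ≤ c*r₀^2/(8*n*L) := hδr
    have h2 : (L:ℝ) * δ ≤ (L:ℝ) * (c*r₀^2/(8*n*L)) :=
      mul_le_mul_of_nonneg_left h1 (le_of_lt hL0)
    have h3 : (L:ℝ) * (c*r₀^2/(8*n*L)) = c*r₀^2/(8*n) := by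
      field_simp
    linarith
  -- Q is nonempty
  have hQne : Q.Nonempty := by
    by_contra hQe
    rw [Set.not_nonempty_iff_eq_empty] at hQe
    have hr₀Icc : r₀ ∈ Icc (0:ℝ) r₀ := ⟨le_of_lt hr₀pos, le_rfl⟩
    have hpos' := posOfNoZero r₀ hr₀Icc (fun t _ => by rw [hQe]; exact notMem_empty t)
    have hcone : ∀ r ∈ Icc (0:ℝ) r₀, ∀ i, 0 ≤ u r i :=
      fun r hr i => le_of_lt (hpos' r hr i)
    have hball := ballLemma r₀ hr₀pos le_rfl hcone
    have hsum := (keyEst r₀ hr₀pos le_rfl hcone hball).2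
    have hsumpos : 0 < ∑ i ∈ Z, u r₀ i :=
      Finset.sum_pos (fun i _ => hpos' r₀ hr₀Icc i) hZne
    have heq : c/(4*n)*r₀^2 = c*r₀^2/(8*n) + c*r₀^2/(8*n) := by
      field_simp
      ring
    have hX : 0 < c*r₀^2/(8*n) := by positivity
    linarith
  set T := sInf Q with hTdef
  have hTQ : T ∈ Q := hQclosed.csInf_mem hQne hQbdd
  clear_value T
  have hT0 : 0 ≤ T := hTQ.1.1
  have hTr₀ : T ≤ r₀ := hTQ.1.2
  have hTpos : 0 < T := by
    rcases eq_or_lt_of_le hT0 with h0 | h0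
    · exfalso
      obtain ⟨i, hi⟩ := hTQ.2
      rw [← h0] at hi
      rw [hu0i i] at hi
      exact absurd hi (ne_of_gt (hα i))
    · exact h0
  have hposIco : ∀ t ∈ Ico (0:ℝ) T, ∀ i, 0 < u t i := by
    intro t ht i
    have hno : ∀ s ∈ Icc (0:ℝ) t, s ∉ Q := by
      intro s hs hsQ
      have := csInf_le hQbdd hsQ
      rw [← hTdef] at this
      linarith [hs.2, ht.2]
    exact posOfNoZero t ⟨ht.1, le_trans (le_of_lt ht.2) hTr₀⟩ hno t ⟨ht.1, le_rfl⟩ i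
  have hconeT : ∀ r ∈ Icc (0:ℝ) T, ∀ i, 0 ≤ u r i := by
    intro r hr i
    rcases lt_or_eq_of_le hr.2 with hlt | heq
    · exact le_of_lt (hposIco r ⟨hr.1, hlt⟩ i)
    · rw [heq]
      have hclos : T ∈ closure (Ico (0:ℝ) T) := by
        rw [closure_Ico (ne_of_lt hTpos)]
        exact ⟨hT0, le_rfl⟩
      have hne : (𝓝[Ico (0:ℝ) T] T).NeBot := mem_closure_iff_nhdsWithin_neBot.1 hclos
      have hrε : T ≤ ε := le_trans hTr₀ (le_of_lt hr₀ε)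
      have htend : Tendsto (fun s => u s i) (𝓝[Ico (0:ℝ) T] T) (𝓝 (u T i)) := by
        have hcw : ContinuousWithinAt (fun s => u s i) (Icc 0 ε) T :=
          hucont i T ⟨hT0, hrε⟩
        exact (hcw.mono (fun x hx => ⟨hx.1, le_trans (le_of_lt hx.2) hrε⟩)).tendsto
      apply ge_of_tendsto htend
      apply eventually_nhdsWithin_of_forall
      intro s hs
      exact le_of_lt (hposIco s hs i)
  have hballT := ballLemma T hTpos hTr₀ hconeT
  have hTIcc : T ∈ Icc (0:ℝ) T := ⟨hT0, le_rfl⟩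
  have hbd := normBd T hTpos hTr₀ hconeT hballT T hTIcc
  have hMT : M*T^2/2 ≤ M*r₀^2/2 := by
    have := pow_le_pow_left₀ hT0 hTr₀ 2
    linarith [mul_le_mul_of_nonneg_left this (le_of_lt hM)]
  have hfinal : ‖u T - ᾱ‖ < ε := by
    have h1 : ‖α - ᾱ‖ < δ := hαδ
    have : ‖u T - ᾱ‖ ≤ ‖α - ᾱ‖ + M*T^2/2 := hbd
    have hρε2 : ρ/2 < ε := by linarith [hρε, hε]
    linarith [hδρ, hr₀M]
  exact ⟨T, hT0, lt_of_le_of_lt hTr₀ hr₀ε, hposIco, hTQ.2, hfinal⟩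
end
end
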